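/- Let (G, K^S_κ) be a stochastic mass-action system and ν(x) = c^x/x! with c ∈ ℝ^n_{>0}. If there exists an active copy f of G such that f + v is node balanced with respect to (K^S_κ, ν) for all v in a set Ξ ⊆ ℤ^n_{≥0} with the property that the only polynomial of degree at most d = max{‖y‖₁ : y → y' ∈ R} vanishing on Ξ is the zero polynomial, then ν is a complex balanced measure. -/

import Mathlib

open MvPolynomial Finset

lemma aux_td_prod_linear {n : ℕ} {ι : Type*} (s : Finset ι) (g : ι → Fin n) (a : ι → ℝ) :
    (∏ l ∈ s, (X (g l) + C (a l)) : MvPolynomial (Fin n) ℝ).totalDegree ≤ s.card := by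
  refine le_trans (totalDegree_finset_prod s _) ?_
  calc ∑ l ∈ s, (X (g l) + C (a l) : MvPolynomial (Fin n) ℝ).totalDegree
      ≤ ∑ l ∈ s, 1 := by
        refine Finset.sum_le_sum fun l _ => ?_
        refine le_trans (totalDegree_add _ _) ?_
        simp [totalDegree_X, totalDegree_C]
    _ = s.card := by simp
lemma aux_weight_sum {n : ℕ} {ι : Type*} (s : Finset ι) (g : ι → Fin n) :
    (∑ i ∈ (∑ l ∈ s, Finsupp.single (g l) 1 : Fin n →₀ ℕ).support,
       (∑ l ∈ s, Finsupp.single (g l) 1 : Fin n →₀ ℕ) i) = s.card := by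
  classical
  induction s using Finset.induction with
  | empty => simp
  | insert l₀ s hl ih =>
    rw [Finset.sum_insert hl]
    have e1 : (∀ (f : Fin n →₀ ℕ), (∑ i ∈ f.support, f i) = f.sum fun _ v => v) := fun f => rfl
    rw [e1, Finsupp.sum_add_index' (fun _ => rfl) (fun _ _ _ => rfl),
      Finsupp.sum_single_index rfl, ← e1, ih, Finset.card_insert_of_notMem hl]
    omega

lemma aux_coeff_top {n : ℕ} {ι : Type*} (s : Finset ι) (g : ι → Fin n) (a : ι → ℝ) :
    MvPolynomial.coeff (∑ l ∈ s, Finsupp.single (g l) 1)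
      (∏ l ∈ s, (X (g l) + C (a l)) : MvPolynomial (Fin n) ℝ) = 1 := by
  classical
  induction s using Finset.induction with
  | empty => simp
  | insert l₀ s hl ih =>
    rw [Finset.prod_insert hl, Finset.sum_insert hl, add_mul, coeff_add, coeff_X_mul, ih,
      coeff_C_mul]
    have hz : MvPolynomial.coeff (Finsupp.single (g l₀) 1 + ∑ l ∈ s, Finsupp.single (g l) 1)
        (∏ l ∈ s, (X (g l) + C (a l)) : MvPolynomial (Fin n) ℝ) = 0 := by
      apply coeff_eq_zero_of_totalDegree_lt
      have h1 := aux_td_prod_linear s g a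
      have h2 := aux_weight_sum (insert l₀ s) g
      rw [Finset.sum_insert hl, Finset.card_insert_of_notMem hl] at h2
      rw [h2]; omega
    rw [hz]; ring

lemma aux_coeff_exceed {n : ℕ} {ι : Type*} [DecidableEq ι] (s : Finset ι) (g : ι → Fin n) (a : ι → ℝ)
    (μ : Fin n →₀ ℕ) (h : ∃ i, (s.filter (fun l => g l = i)).card < μ i) :
    MvPolynomial.coeff μ (∏ l ∈ s, (X (g l) + C (a l)) : MvPolynomial (Fin n) ℝ) = 0 := by
  classical
  induction s using Finset.induction generalizing μ with
  | empty =>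
    obtain ⟨i, hi⟩ := h
    simp only [Finset.filter_empty, Finset.card_empty] at hi
    rw [Finset.prod_empty, coeff_one]
    have : μ ≠ 0 := by
      intro h0; rw [h0] at hi; simp at hi
    simp [Ne.symm this]
  | insert l₀ s hl ih =>
    obtain ⟨i, hi⟩ := h
    have hcard : (s.filter (fun l => g l = i)).card ≤ ((insert l₀ s).filter (fun l => g l = i)).card := by
      apply Finset.card_le_card; apply Finset.filter_subset_filter; exact Finset.subset_insert _ _
    rw [Finset.prod_insert hl, add_mul, coeff_add, coeff_C_mul, coeff_X_mul']
    rw [ih μ ⟨i, lt_of_le_of_lt hcard hi⟩, mul_zero, add_zero]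
    by_cases hmem : g l₀ ∈ μ.support
    · rw [if_pos hmem]
      apply ih (μ - Finsupp.single (g l₀) 1)
      by_cases hgi : g l₀ = i
      · refine ⟨i, ?_⟩
        have hins : ((insert l₀ s).filter (fun l => g l = i)).card
            = (s.filter (fun l => g l = i)).card + 1 := by
          rw [Finset.filter_insert, if_pos hgi, Finset.card_insert_of_notMem]
          intro hc; exact hl (Finset.mem_of_mem_filter _ hc)
        have : (μ - Finsupp.single (g l₀) 1 : Fin n →₀ ℕ) i = μ i - 1 := by
          subst hgi; simp [Finsupp.sub_apply]
        rw [this]; omega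
      · refine ⟨i, ?_⟩
        have hins : ((insert l₀ s).filter (fun l => g l = i)).card
            = (s.filter (fun l => g l = i)).card := by
          rw [Finset.filter_insert, if_neg hgi]
        have : (μ - Finsupp.single (g l₀) 1 : Fin n →₀ ℕ) i = μ i := by
          simp [Finsupp.sub_apply, Finsupp.single_apply, hgi]
        rw [this]; omega
    · rw [if_neg hmem]

lemma aux_fact_ratio (A B : ℕ) (h : B ≤ A) :
    (A.factorial : ℝ) = ((A - B).factorial : ℝ) * ∏ j ∈ Finset.range B, ((A : ℝ) - j) := by
  induction B with
  | zero => simp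
  | succ B ih =>
    have hB : B ≤ A := le_of_lt (Nat.lt_of_lt_of_le (Nat.lt_succ_self B) h)
    rw [Finset.prod_range_succ]
    have h1 : A - B = (A - (B+1)) + 1 := by omega
    have h2 : ((A - B).factorial : ℝ) = ((A - (B+1)).factorial : ℝ) * ((A:ℝ) - B) := by
      rw [h1, Nat.factorial_succ]
      push_cast
      have : ((A - (B+1) : ℕ) : ℝ) = (A:ℝ) - B - 1 := by
        have : (A - (B+1) : ℕ) = A - B - 1 := by omega
        rw [this, Nat.cast_sub (by omega : 1 ≤ A - B), Nat.cast_sub hB]; norm_num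
      rw [this]; ring
    rw [ih hB, h2]; ring

lemma aux_regroup {α β : Type*} [DecidableEq α] (Rs : Finset β) (S : Finset α) (p : β → α)
    (g : β → ℝ) :
    ∑ e ∈ Rs.filter (fun e => p e ∈ S), g e = ∑ m ∈ S, ∑ e ∈ Rs.filter (fun e => p e = m), g e := by
  rw [Finset.sum_filter]
  have : ∀ m, ∑ e ∈ Rs.filter (fun e => p e = m), g e = ∑ e ∈ Rs, if p e = m then g e else 0 :=
    fun m => Finset.sum_filter _ _
  simp only [this]
  rw [Finset.sum_comm]
  refine Finset.sum_congr rfl fun e _ => ?_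
  rw [Finset.sum_ite_eq S (p e) (fun _ => g e)]
open MvPolynomial Finset
noncomputable def NmD (n : ℕ) (z : Fin n → ℤ) : ℕ := ∑ i, (z i).toNat

noncomputable def ffactD (n : ℕ) (z : Fin n → ℤ) : ℝ := ∏ i, (((z i).toNat).factorial : ℝ)

noncomputable def cpowD (n : ℕ) (c : Fin n → ℝ) (z : Fin n → ℤ) : ℝ := ∏ i, c i ^ (z i).toNat

def sigmaD (n : ℕ) (m : Fin n → ℤ) : Finset ((_ : Fin n) × ℕ) :=
  Finset.univ.sigma (fun i => Finset.range (m i).toNat)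

noncomputable def FFpoly (n : ℕ) (Xv m : Fin n → ℤ) : MvPolynomial (Fin n) ℝ :=
  ∏ l ∈ sigmaD n m, (X l.1 + C ((Xv l.1 : ℝ) - (l.2 : ℝ)))

noncomputable def muD (n : ℕ) (m : Fin n → ℤ) : Fin n →₀ ℕ :=
  ∑ l ∈ sigmaD n m, Finsupp.single l.1 1

lemma ffactD_pos (n : ℕ) (z : Fin n → ℤ) : 0 < ffactD n z :=
  Finset.prod_pos fun i _ => by positivity

lemma sigmaD_card (n : ℕ) (m : Fin n → ℤ) : (sigmaD n m).card = NmD n m := by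
  rw [sigmaD, Finset.card_sigma, NmD]
  simp

lemma sigmaD_filter_card (n : ℕ) (m : Fin n → ℤ) (i₀ : Fin n) :
    ((sigmaD n m).filter (fun l => l.1 = i₀)).card = (m i₀).toNat := by
  have : (sigmaD n m).filter (fun l => l.1 = i₀) = Finset.sigma {i₀} (fun i => Finset.range (m i).toNat) := by
    ext ⟨a, b⟩
    simp [sigmaD, and_comm]
  rw [this, Finset.card_sigma]
  simp

lemma muD_apply (n : ℕ) (m : Fin n → ℤ) (i₀ : Fin n) : muD n m i₀ = (m i₀).toNat := by
  rw [muD, ← sigmaD_filter_card n m i₀]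
  rw [Finsupp.finset_sum_apply]
  rw [Finset.card_filter]
  refine Finset.sum_congr rfl fun l _ => ?_
  rw [Finsupp.single_apply]

lemma FFpoly_td (n : ℕ) (Xv m : Fin n → ℤ) : (FFpoly n Xv m).totalDegree ≤ NmD n m := by
  rw [← sigmaD_card n m]
  exact aux_td_prod_linear _ _ _

lemma FFpoly_coeff_top (n : ℕ) (Xv m : Fin n → ℤ) :
    MvPolynomial.coeff (muD n m) (FFpoly n Xv m) = 1 :=
  aux_coeff_top _ _ _

lemma FFpoly_coeff_zero (n : ℕ) (Xv m m'' : Fin n → ℤ)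
    (h : ∃ i, (m i).toNat < (m'' i).toNat) :
    MvPolynomial.coeff (muD n m'') (FFpoly n Xv m) = 0 := by
  apply aux_coeff_exceed
  obtain ⟨i, hi⟩ := h
  exact ⟨i, by rw [sigmaD_filter_card, muD_apply]; exact hi⟩

lemma FFpoly_eval (n : ℕ) (Xv m v : Fin n → ℤ) (hm0 : ∀ i, 0 ≤ m i)
    (hmx : ∀ i, m i ≤ Xv i + v i) :
    MvPolynomial.eval (fun i => (v i : ℝ)) (FFpoly n Xv m)
      = ffactD n (Xv + v) / ffactD n (Xv + v - m) := by
  rw [FFpoly, map_prod, sigmaD, Finset.prod_sigma]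
  have key : ∀ i : Fin n, ∏ j ∈ Finset.range (m i).toNat,
      MvPolynomial.eval (fun i => (v i : ℝ)) (X i + C ((Xv i : ℝ) - (j : ℝ)))
      = (((Xv i + v i).toNat).factorial : ℝ) / (((Xv i + v i - m i).toNat).factorial : ℝ) := by
    intro i
    have hA : (0:ℤ) ≤ Xv i + v i := le_trans (hm0 i) (hmx i)
    have hm := hm0 i
    have hx := hmx i
    have hB : (m i).toNat ≤ (Xv i + v i).toNat := by omega
    have hfr := aux_fact_ratio ((Xv i + v i).toNat) ((m i).toNat) hB
    have hAB : (Xv i + v i).toNat - (m i).toNat = (Xv i + v i - m i).toNat := by omega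
    have hcast : (((Xv i + v i).toNat : ℕ) : ℝ) = (Xv i : ℝ) + (v i : ℝ) := by
      have h' := Int.toNat_of_nonneg hA
      calc (((Xv i + v i).toNat : ℕ) : ℝ) = (((Xv i + v i).toNat : ℤ) : ℝ) := by push_cast; ring
        _ = ((Xv i + v i : ℤ) : ℝ) := by rw [h']
        _ = (Xv i : ℝ) + (v i : ℝ) := by push_cast; ring
    rw [hAB] at hfr
    have hprod : ∏ j ∈ Finset.range (m i).toNat,
        MvPolynomial.eval (fun i => (v i : ℝ)) (X i + C ((Xv i : ℝ) - (j : ℝ)))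
        = ∏ j ∈ Finset.range (m i).toNat, ((((Xv i + v i).toNat : ℕ) : ℝ) - (j:ℝ)) := by
      refine Finset.prod_congr rfl fun j _ => ?_
      simp [hcast]
      ring
    rw [hprod]
    rw [hfr]
    have : (((Xv i + v i - m i).toNat).factorial : ℝ) ≠ 0 := by positivity
    field_simp
  rw [Finset.prod_congr rfl (fun i _ => key i)]
  rw [ffactD, ffactD, ← Finset.prod_div_distrib]
  rfl
lemma alg1 (P F1 F2 k : ℝ) (h1 : F1 ≠ 0) : (P / F1) * (k * (F1 / F2)) = k * (P / F2) := by
  calc (P / F1) * (k * (F1 / F2)) = k * (F1 / F1) * (P / F2) := by ring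
    _ = k * (P / F2) := by rw [div_self h1]; ring

lemma alg3 (a b q r fx : ℝ) (hq : q ≠ 0) :
    ((a * q - b) / q) * (fx / r) = a * (fx / r) - b * (fx / (q * r)) := by
  calc ((a * q - b) / q) * (fx / r) = a * (q / q) * (fx / r) - (b / q) * (fx / r) := by ring
    _ = a * (fx / r) - b * (fx / (q * r)) := by rw [div_self hq]; ring

lemma alg2 (W F G P Q1 Q2 k : ℝ) (hF : F ≠ 0) (hQ2 : Q2 ≠ 0) (hcw : W * Q2 = P * Q1) :
    (W / F) * (k * (F / G)) = (k * Q1) * (P / (Q2 * G)) := by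
  have hW : W = P * Q1 / Q2 := by rw [eq_div_iff hQ2]; exact hcw
  rw [hW]
  calc (P * Q1 / Q2 / F) * (k * (F / G)) = k * Q1 * (F / F) * (P / (Q2 * G)) := by ring
    _ = (k * Q1) * (P / (Q2 * G)) := by rw [div_self hF]; ring

set_option maxHeartbeats 1000000 in
theorem key_balance
    (n d : ℕ) [DecidableEq (Fin n → ℤ)]
    (C : Finset (Fin n → ℤ)) (R : Finset ((Fin n → ℤ) × (Fin n → ℤ)))
    (hCnn : ∀ y ∈ C, (0 : Fin n → ℤ) ≤ y)
    (hR : ∀ e ∈ R, e.1 ∈ C ∧ e.2 ∈ C ∧ e.1 ≠ e.2)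
    (hcover : ∀ y ∈ C, ∃ e ∈ R, e.1 = y ∨ e.2 = y)
    (κ : (Fin n → ℤ) × (Fin n → ℤ) → ℝ) (hκ : ∀ e ∈ R, 0 < κ e)
    (Λ : (Fin n → ℤ) × (Fin n → ℤ) → (Fin n → ℤ) → ℝ)
    (hΛ : ∀ e : (Fin n → ℤ) × (Fin n → ℤ), ∀ x : Fin n → ℤ,
      Λ e x = κ e * (if ∀ i, e.1 i ≤ x i then
          ∏ i, ((Nat.factorial (x i).toNat : ℝ)
            / (Nat.factorial ((x i - e.1 i).toNat) : ℝ))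
        else 0))
    (c : Fin n → ℝ) (hc : ∀ i, 0 < c i)
    (ν : (Fin n → ℤ) → ℝ)
    (hν : ∀ x : Fin n → ℤ, (0 : Fin n → ℤ) ≤ x →
      ν x = (∏ i, c i ^ (x i).toNat) / ∏ i, (Nat.factorial (x i).toNat : ℝ))
    (hν0 : ∀ x : Fin n → ℤ, ¬ (0 : Fin n → ℤ) ≤ x → ν x = 0)
    (hd : d = R.sup (fun e => ∑ i, (e.1 i).toNat))
    (Ξ : Set (Fin n → ℤ)) (hΞnn : ∀ v ∈ Ξ, (0 : Fin n → ℤ) ≤ v)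
    (hΞ : ∀ p : MvPolynomial (Fin n) ℝ, p.totalDegree ≤ d →
      (∀ v ∈ Ξ, MvPolynomial.eval (fun i => ((v i : ℤ) : ℝ)) p = 0) → p = 0)
    (f : (Fin n → ℤ) → (Fin n → ℤ))
    (hfnn : ∀ z ∈ C, (0 : Fin n → ℤ) ≤ f z)
    (hcopy : ∀ e ∈ R, f e.2 - f e.1 = e.2 - e.1)
    (hact : ∀ e ∈ R, 0 < Λ e (f e.1))
    (hnb : ∀ v ∈ Ξ, ∀ x ∈ C.image (fun z => f z + v),
      ν x * ∑ e ∈ R.filter (fun e => f e.1 + v = x), Λ e x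
        = ∑ e ∈ R.filter (fun e => f e.2 + v = x),
            ν (f e.1 + v) * Λ e (f e.1 + v)) :
    ∀ y ∈ C, (∑ e ∈ R.filter (fun e => e.1 = y), κ e) * cpowD n c y
        = ∑ e ∈ R.filter (fun e => e.2 = y), κ e * cpowD n c e.1 := by
  classical
  set A : (Fin n → ℤ) → ℝ := fun m => ∑ e ∈ R.filter (fun e => e.1 = m), κ e with hA
  set B : (Fin n → ℤ) → ℝ := fun m => ∑ e ∈ R.filter (fun e => e.2 = m), κ e * cpowD n c e.1 with hB
  set δ : (Fin n → ℤ) → ℝ := fun m => A m * cpowD n c m - B m with hδ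
  -- it suffices to show δ vanishes on C
  suffices hgoal : ∀ y ∈ C, δ y = 0 by
    intro y hy
    have := hgoal y hy
    rw [hδ] at this
    simp only at this
    linarith
  by_contra hcon
  push_neg at hcon
  obtain ⟨y₀, hy₀C, hy₀⟩ := hcon
  -- basic positivity
  have hcpow_pos : ∀ z : Fin n → ℤ, 0 < cpowD n c z := by
    intro z; exact Finset.prod_pos fun i _ => pow_pos (hc i) _
  have hBnn : ∀ m, 0 ≤ B m := by
    intro m
    refine Finset.sum_nonneg fun e he => ?_
    have heR : e ∈ R := Finset.mem_of_mem_filter _ he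
    exact le_of_lt (mul_pos (hκ e heR) (hcpow_pos _))
  have hCnn' : ∀ z ∈ C, ∀ i, (0:ℤ) ≤ z i := by
    intro z hz i
    simpa using hCnn z hz i
  -- sources sit below their f-image
  have hsrc : ∀ e ∈ R, ∀ i, e.1 i ≤ f e.1 i := by
    intro e he i
    have h := hact e he
    rw [hΛ] at h
    by_contra hcnt
    have hnall : ¬ (∀ j, e.1 j ≤ f e.1 j) := fun hall => hcnt (hall i)
    rw [if_neg hnall, mul_zero] at h
    exact lt_irrefl 0 h
  -- shift is nonnegative on C
  have htnn : ∀ m ∈ C, ∀ i, 0 ≤ f m i - m i := by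
    intro m hm i
    obtain ⟨e, he, hor⟩ := hcover m hm
    rcases hor with h1 | h2
    · subst h1; have := hsrc e he i; omega
    · subst h2
      have hcf := congrFun (hcopy e he) i
      simp only [Pi.sub_apply] at hcf
      have := hsrc e he i
      omega
  -- the set of unbalanced complexes
  set U : Finset (Fin n → ℤ) := C.filter (fun m => δ m ≠ 0) with hUdef
  have hUne : U.Nonempty := ⟨y₀, Finset.mem_filter.2 ⟨hy₀C, hy₀⟩⟩
  obtain ⟨m₀, hm₀U, hm₀min⟩ := U.exists_min_image (fun m => NmD n (f m - m)) hUne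
  -- the connected component of m₀
  set step : (Fin n → ℤ) → (Fin n → ℤ) → Prop :=
    fun a b => ∃ e ∈ R, (e.1 = a ∧ e.2 = b) ∨ (e.1 = b ∧ e.2 = a) with hstepdef
  set K : Finset (Fin n → ℤ) := C.filter (fun m => Relation.ReflTransGen step m₀ m) with hKdef
  have hm₀C : m₀ ∈ C := (Finset.mem_filter.1 hm₀U).1
  have hm₀K : m₀ ∈ K := Finset.mem_filter.2 ⟨hm₀C, Relation.ReflTransGen.refl⟩
  have hstepC : ∀ a b, step a b → b ∈ C := by
    intro a b hs
    obtain ⟨e, he, hor⟩ := hs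
    rcases hor with ⟨h1, h2⟩ | ⟨h1, h2⟩
    · rw [← h2]; exact (hR e he).2.1
    · rw [← h1]; exact (hR e he).1
  have hstept : ∀ a b, step a b → f b - b = f a - a := by
    intro a b ⟨e, he, hor⟩
    have hcf := hcopy e he
    rcases hor with ⟨h1, h2⟩ | ⟨h1, h2⟩
    · rw [← h1, ← h2]; funext i
      have := congrFun hcf i; simp only [Pi.sub_apply] at this ⊢; omega
    · rw [← h1, ← h2]; funext i
      have := congrFun hcf i; simp only [Pi.sub_apply] at this ⊢; omega
  have hKt : ∀ m, Relation.ReflTransGen step m₀ m → f m - m = f m₀ - m₀ := by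
    intro m h
    induction h with
    | refl => rfl
    | tail h1 h2 ih =>
      rename_i b c'
      rw [hstept b c' h2, ih]
  have hKmem : ∀ m, Relation.ReflTransGen step m₀ m → m ∈ C := by
    intro m h
    induction h with
    | refl => exact hm₀C
    | tail h1 h2 ih =>
      rename_i b c'
      exact hstepC b c' h2
  have hKclosed : ∀ e ∈ R, (e.1 ∈ K ↔ e.2 ∈ K) := by
    intro e he
    constructor
    · intro h1
      refine Finset.mem_filter.2 ⟨(hR e he).2.1, ?_⟩
      exact Relation.ReflTransGen.tail (Finset.mem_filter.1 h1).2 ⟨e, he, Or.inl ⟨rfl, rfl⟩⟩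
    · intro h2
      refine Finset.mem_filter.2 ⟨(hR e he).1, ?_⟩
      exact Relation.ReflTransGen.tail (Finset.mem_filter.1 h2).2 ⟨e, he, Or.inr ⟨rfl, rfl⟩⟩
  -- component sum of δ is zero
  have hKsum : ∑ m ∈ K, δ m = 0 := by
    have hA' : ∑ m ∈ K, A m * cpowD n c m = ∑ e ∈ R.filter (fun e => e.1 ∈ K), κ e * cpowD n c e.1 := by
      rw [aux_regroup R K (fun e => e.1) (fun e => κ e * cpowD n c e.1)]
      refine Finset.sum_congr rfl fun m hm => ?_
      rw [hA]
      rw [Finset.sum_mul]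
      refine Finset.sum_congr rfl fun e he => ?_
      have : e.1 = m := (Finset.mem_filter.1 he).2
      rw [this]
    have hB' : ∑ m ∈ K, B m = ∑ e ∈ R.filter (fun e => e.2 ∈ K), κ e * cpowD n c e.1 := by
      rw [aux_regroup R K (fun e => e.2) (fun e => κ e * cpowD n c e.1)]
    have hfe : R.filter (fun e => e.1 ∈ K) = R.filter (fun e => e.2 ∈ K) := by
      refine Finset.filter_congr fun e he => ?_
      exact hKclosed e he
    simp only [hδ]
    rw [Finset.sum_sub_distrib, hA', hB', hfe, sub_self]
  -- find a positively unbalanced complex in K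
  have hex : ∃ m' ∈ K, 0 < δ m' := by
    by_cases h0 : 0 < δ m₀
    · exact ⟨m₀, hm₀K, h0⟩
    · by_contra hno
      push_neg at hno
      have hm₀ne : δ m₀ ≠ 0 := (Finset.mem_filter.1 hm₀U).2
      have hlt : ∑ m ∈ K, δ m < ∑ m ∈ K, (0:ℝ) := by
        refine Finset.sum_lt_sum (fun m hm => hno m hm) ⟨m₀, hm₀K, ?_⟩
        rcases lt_or_gt_of_ne hm₀ne with h | h
        · exact h
        · exact absurd h h0
      rw [Finset.sum_const_zero] at hlt
      rw [hKsum] at hlt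
      exact lt_irrefl 0 hlt
  obtain ⟨m', hm'K, hm'pos⟩ := hex
  have hm'C : m' ∈ C := (Finset.mem_filter.1 hm'K).1
  have hm'U : m' ∈ U := Finset.mem_filter.2 ⟨hm'C, ne_of_gt hm'pos⟩
  have hm'T : NmD n (f m' - m') = NmD n (f m₀ - m₀) := by
    rw [hKt m' (Finset.mem_filter.1 hm'K).2]
  -- m' is a source, so its norm is at most d
  have hm'src : ∃ e ∈ R, e.1 = m' := by
    by_contra hno
    push_neg at hno
    have : R.filter (fun e => e.1 = m') = ∅ := by
      refine Finset.filter_eq_empty_iff.2 fun e he => hno e he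
    have hA0 : A m' = 0 := by rw [hA]; simp only [this, Finset.sum_empty]
    have : δ m' ≤ 0 := by
      simp only [hδ, hA0, zero_mul, zero_sub]
      linarith [hBnn m']
    linarith
  obtain ⟨e₀, he₀R, he₀⟩ := hm'src
  have hm'd : NmD n m' ≤ d := by
    rw [hd]
    calc NmD n m' = ∑ i, (e₀.1 i).toNat := by rw [he₀]; rfl
      _ ≤ R.sup (fun e => ∑ i, (e.1 i).toNat) := Finset.le_sup (f := fun e : (Fin n → ℤ) × (Fin n → ℤ) => ∑ i, (e.1 i).toNat) he₀R
  -- the node of m'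
  set X' : Fin n → ℤ := f m' with hX'def
  set S : Finset (Fin n → ℤ) := C.filter (fun m => f m = X' ∧ δ m ≠ 0) with hSdef
  have hm'S : m' ∈ S := Finset.mem_filter.2 ⟨hm'C, rfl, ne_of_gt hm'pos⟩
  -- norms of complexes at the node are bounded by the norm of m'
  have hnode : ∀ m ∈ S, NmD n m + NmD n (f m - m) = NmD n m' + NmD n (f m' - m') := by
    intro m hm
    have hmC : m ∈ C := (Finset.mem_filter.1 hm).1
    have hfm : f m = X' := (Finset.mem_filter.1 hm).2.1
    have h1 : ∀ z ∈ C, NmD n z + NmD n (f z - z) = NmD n (f z) := by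
      intro z hz
      rw [NmD, NmD, NmD, ← Finset.sum_add_distrib]
      refine Finset.sum_congr rfl fun i _ => ?_
      have h0 := hCnn' z hz i
      have h1 := htnn z hz i
      simp only [Pi.sub_apply]
      omega
    rw [h1 m hmC, h1 m' hm'C, hfm]
  have hSnorm : ∀ m ∈ S, NmD n m ≤ NmD n m' := by
    intro m hm
    have hmU : m ∈ U := Finset.mem_filter.2 ⟨(Finset.mem_filter.1 hm).1, (Finset.mem_filter.1 hm).2.2⟩
    have h1 := hm₀min m hmU
    have h2 := hnode m hm
    rw [hm'T] at h2
    omega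
  -- if a complex at the node dominates m', it equals m'
  have hSeq : ∀ m ∈ S, (∀ i, m' i ≤ m i) → m = m' := by
    intro m hm hdom
    have hmC : m ∈ C := (Finset.mem_filter.1 hm).1
    have hple : ∀ i, (m' i).toNat ≤ (m i).toNat := by
      intro i; have h1 := hdom i; have h2 := hCnn' m' hm'C i; omega
    by_contra hne
    have hex : ∃ i, m' i < m i := by
      by_contra hno
      push_neg at hno
      exact hne (funext fun i => le_antisymm (hno i) (hdom i))
    obtain ⟨i₀, hi₀⟩ := hex
    have hstrict : NmD n m' < NmD n m := by
      rw [NmD, NmD]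
      refine Finset.sum_lt_sum (fun i _ => hple i) ⟨i₀, Finset.mem_univ _, ?_⟩
      have := hCnn' m' hm'C i₀
      omega
    have := hSnorm m hm
    omega
  -- the node set
  set CX : Finset (Fin n → ℤ) := C.filter (fun m => f m = X') with hCXdef
  have hSsubCX : S ⊆ CX := by
    intro m hm
    exact Finset.mem_filter.2 ⟨(Finset.mem_filter.1 hm).1, (Finset.mem_filter.1 hm).2.1⟩
  have hffact_ne : ∀ z : Fin n → ℤ, ffactD n z ≠ 0 := fun z => ne_of_gt (ffactD_pos n z)
  have hcpow_ne : ∀ z : Fin n → ℤ, cpowD n c z ≠ 0 := fun z => ne_of_gt (hcpow_pos z)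
  -- the polynomial attached to the node of m'
  set P : MvPolynomial (Fin n) ℝ :=
    ∑ m ∈ S, MvPolynomial.C (δ m / cpowD n c m) * FFpoly n X' m with hPdef
  have hPd : P.totalDegree ≤ d := by
    refine le_trans (MvPolynomial.totalDegree_finset_sum _ _) ?_
    refine Finset.sup_le fun m hm => ?_
    refine le_trans (MvPolynomial.totalDegree_mul _ _) ?_
    rw [MvPolynomial.totalDegree_C]
    have h1 := FFpoly_td n X' m
    have h2 := hSnorm m hm
    omega
  have hPeval : ∀ v ∈ Ξ, MvPolynomial.eval (fun i => ((v i : ℤ) : ℝ)) P = 0 := by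
    intro v hv
    have hvnn : ∀ i, (0:ℤ) ≤ v i := fun i => by simpa using hΞnn v hv i
    set x : Fin n → ℤ := X' + v with hxdef
    have hxmem : x ∈ C.image (fun z => f z + v) := Finset.mem_image.2 ⟨m', hm'C, rfl⟩
    have hX'nn : ∀ i, (0:ℤ) ≤ X' i := fun i => by simpa using hfnn m' hm'C i
    have hxnn' : ∀ i, (0:ℤ) ≤ x i := fun i => by
      have h1 := hX'nn i; have h2 := hvnn i
      simp only [hxdef, Pi.add_apply]; omega
    have hxnn : (0 : Fin n → ℤ) ≤ x := by
      intro i; simpa using hxnn' i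
    have heq := hnb v hv x hxmem
    -- rewrite the left-hand side
    have hF1 : R.filter (fun e => f e.1 + v = x) = R.filter (fun e => e.1 ∈ CX) := by
      refine Finset.filter_congr fun e he => ?_
      constructor
      · intro h1
        refine Finset.mem_filter.2 ⟨(hR e he).1, ?_⟩
        have : f e.1 + v = X' + v := h1
        exact add_right_cancel this
      · intro h1
        have : f e.1 = X' := (Finset.mem_filter.1 h1).2
        rw [hxdef, this]
    have hL1 : ν x * ∑ e ∈ R.filter (fun e => f e.1 + v = x), Λ e x
        = ∑ m ∈ CX, A m * (cpowD n c x / ffactD n (x - m)) := by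
      rw [hF1, Finset.mul_sum]
      have hterm : ∀ e ∈ R.filter (fun e => e.1 ∈ CX),
          ν x * Λ e x = κ e * (cpowD n c x / ffactD n (x - e.1)) := by
        intro e he
        have heR : e ∈ R := Finset.mem_of_mem_filter _ he
        have heCX : e.1 ∈ CX := (Finset.mem_filter.1 he).2
        have hfe1 : f e.1 = X' := (Finset.mem_filter.1 heCX).2
        have hcond : ∀ i, e.1 i ≤ x i := by
          intro i
          have h1 := hsrc e heR i
          have h2 := hvnn i
          have h3 := congrFun hfe1 i
          simp only [hxdef, Pi.add_apply]
          omega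
        rw [hΛ e x, if_pos hcond, hν x hxnn]
        have hpd : ∏ i, ((Nat.factorial (x i).toNat : ℝ) / (Nat.factorial ((x i - e.1 i).toNat) : ℝ))
            = ffactD n x / ffactD n (x - e.1) := by
          rw [Finset.prod_div_distrib]
          rw [ffactD, ffactD]
          congr 1
        rw [hpd]
        rw [show (∏ i, c i ^ (x i).toNat) = cpowD n c x from rfl,
          show (∏ i, (Nat.factorial (x i).toNat : ℝ)) = ffactD n x from rfl]
        exact alg1 (cpowD n c x) (ffactD n x) (ffactD n (x - e.1)) (κ e) (hffact_ne _)
      rw [Finset.sum_congr rfl hterm]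
      rw [aux_regroup R CX (fun e => e.1) (fun e => κ e * (cpowD n c x / ffactD n (x - e.1)))]
      refine Finset.sum_congr rfl fun m hm => ?_
      rw [hA, Finset.sum_mul]
      refine Finset.sum_congr rfl fun e he => ?_
      have : e.1 = m := (Finset.mem_filter.1 he).2
      rw [this]
    -- rewrite the right-hand side
    have hF2 : R.filter (fun e => f e.2 + v = x) = R.filter (fun e => e.2 ∈ CX) := by
      refine Finset.filter_congr fun e he => ?_
      constructor
      · intro h1
        refine Finset.mem_filter.2 ⟨(hR e he).2.1, ?_⟩
        have : f e.2 + v = X' + v := h1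
        exact add_right_cancel this
      · intro h1
        have : f e.2 = X' := (Finset.mem_filter.1 h1).2
        rw [hxdef, this]
    have hL2 : ∑ e ∈ R.filter (fun e => f e.2 + v = x), ν (f e.1 + v) * Λ e (f e.1 + v)
        = ∑ m ∈ CX, B m * (cpowD n c x / (cpowD n c m * ffactD n (x - m))) := by
      rw [hF2]
      have hterm : ∀ e ∈ R.filter (fun e => e.2 ∈ CX),
          ν (f e.1 + v) * Λ e (f e.1 + v)
            = (κ e * cpowD n c e.1) * (cpowD n c x / (cpowD n c e.2 * ffactD n (x - e.2))) := by
        intro e he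
        have heR : e ∈ R := Finset.mem_of_mem_filter _ he
        have heCX : e.2 ∈ CX := (Finset.mem_filter.1 he).2
        have hfe2 : f e.2 = X' := (Finset.mem_filter.1 heCX).2
        have he1nn : ∀ i, (0:ℤ) ≤ e.1 i := hCnn' e.1 (hR e heR).1
        have he2nn : ∀ i, (0:ℤ) ≤ e.2 i := hCnn' e.2 (hR e heR).2.1
        set w : Fin n → ℤ := f e.1 + v with hwdef
        have hcopye : ∀ i, f e.2 i - f e.1 i = e.2 i - e.1 i := by
          intro i
          have := congrFun (hcopy e heR) i
          simpa using this
        have hw : ∀ i, w i = x i + e.1 i - e.2 i := by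
          intro i
          have h1 := hcopye i
          have h2 := congrFun hfe2 i
          simp only [hwdef, hxdef, Pi.add_apply]
          omega
        have hcond : ∀ i, e.1 i ≤ w i := by
          intro i
          have h1 := hsrc e heR i
          have h2 := hvnn i
          simp only [hwdef, Pi.add_apply]
          omega
        have hwnn' : ∀ i, (0:ℤ) ≤ w i := fun i => le_trans (he1nn i) (hcond i)
        have hwnn : (0 : Fin n → ℤ) ≤ w := by intro i; simpa using hwnn' i
        have hwe : ∀ i, w i - e.1 i = x i - e.2 i := by
          intro i; have := hw i; omega
        rw [hΛ e w, if_pos hcond, hν w hwnn]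
        have hpd : ∏ i, ((Nat.factorial (w i).toNat : ℝ) / (Nat.factorial ((w i - e.1 i).toNat) : ℝ))
            = ffactD n w / ffactD n (x - e.2) := by
          rw [Finset.prod_div_distrib]
          rw [ffactD, ffactD]
          congr 1
          refine Finset.prod_congr rfl fun i _ => ?_
          rw [show (x - e.2) i = x i - e.2 i from rfl, ← hwe i]
        have hcw : cpowD n c w * cpowD n c e.2 = cpowD n c x * cpowD n c e.1 := by
          rw [cpowD, cpowD, cpowD, cpowD, ← Finset.prod_mul_distrib, ← Finset.prod_mul_distrib]
          refine Finset.prod_congr rfl fun i _ => ?_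
          rw [← pow_add, ← pow_add]
          congr 1
          have h1 := hw i
          have h2 := he1nn i
          have h3 := he2nn i
          have h4 := hwnn' i
          have h5 := hxnn' i
          omega
        rw [hpd]
        rw [show (∏ i, c i ^ (w i).toNat) = cpowD n c w from rfl,
          show (∏ i, (Nat.factorial (w i).toNat : ℝ)) = ffactD n w from rfl]
        exact alg2 (cpowD n c w) (ffactD n w) (ffactD n (x - e.2)) (cpowD n c x)
          (cpowD n c e.1) (cpowD n c e.2) (κ e) (hffact_ne _) (hcpow_ne _) hcw
      rw [Finset.sum_congr rfl hterm]
      rw [aux_regroup R CX (fun e => e.2)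
        (fun e => (κ e * cpowD n c e.1) * (cpowD n c x / (cpowD n c e.2 * ffactD n (x - e.2))))]
      refine Finset.sum_congr rfl fun m hm => ?_
      rw [hB, Finset.sum_mul]
      refine Finset.sum_congr rfl fun e he => ?_
      have : e.2 = m := (Finset.mem_filter.1 he).2
      rw [this]
    -- the grouped node identity
    have hnode0 : ∑ m ∈ CX, (δ m / cpowD n c m) * (cpowD n c x / ffactD n (x - m)) = 0 := by
      have h1 : ∀ m ∈ CX, (δ m / cpowD n c m) * (cpowD n c x / ffactD n (x - m))
          = A m * (cpowD n c x / ffactD n (x - m))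
            - B m * (cpowD n c x / (cpowD n c m * ffactD n (x - m))) := by
        intro m hm
        simp only [hδ]
        exact alg3 (A m) (B m) (cpowD n c m) (ffactD n (x - m)) (cpowD n c x) (hcpow_ne m)
      rw [Finset.sum_congr rfl h1, Finset.sum_sub_distrib, ← hL1, ← hL2, heq, sub_self]
    have hnodeS : ∑ m ∈ S, (δ m / cpowD n c m) * (cpowD n c x / ffactD n (x - m)) = 0 := by
      rw [← hnode0]
      refine Finset.sum_subset hSsubCX fun m hm hnm => ?_
      have hδ0 : δ m = 0 := by
        by_contra hne
        exact hnm (Finset.mem_filter.2 ⟨(Finset.mem_filter.1 hm).1,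
          (Finset.mem_filter.1 hm).2, hne⟩)
      rw [hδ0, zero_div, zero_mul]
    -- evaluate the polynomial
    have hevalFF : ∀ m ∈ S, MvPolynomial.eval (fun i => ((v i : ℤ) : ℝ)) (FFpoly n X' m)
        = ffactD n x / ffactD n (x - m) := by
      intro m hm
      have hmC : m ∈ C := (Finset.mem_filter.1 hm).1
      have hfm : f m = X' := (Finset.mem_filter.1 hm).2.1
      have harg : ∀ i, m i ≤ X' i + v i := by
        intro i
        have h1 := htnn m hmC i
        have h2 := congrFun hfm i
        have h3 := hvnn i
        omega
      exact FFpoly_eval n X' m v (hCnn' m hmC) harg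
    rw [hPdef]
    rw [map_sum]
    have hterm2 : ∀ m ∈ S, MvPolynomial.eval (fun i => ((v i : ℤ) : ℝ))
        (MvPolynomial.C (δ m / cpowD n c m) * FFpoly n X' m)
        = (ffactD n x / cpowD n c x) * ((δ m / cpowD n c m) * (cpowD n c x / ffactD n (x - m))) := by
      intro m hm
      rw [map_mul, MvPolynomial.eval_C, hevalFF m hm]
      rw [alg1 (ffactD n x) (cpowD n c x) (ffactD n (x - m)) (δ m / cpowD n c m) (hcpow_ne _)]
    rw [Finset.sum_congr rfl hterm2, ← Finset.mul_sum, hnodeS, mul_zero]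
  -- conclude that the polynomial is zero and derive the contradiction
  have hP0 : P = 0 := hΞ P hPd hPeval
  have hcoeff : MvPolynomial.coeff (muD n m') P = δ m' / cpowD n c m' := by
    rw [hPdef, MvPolynomial.coeff_sum]
    rw [Finset.sum_eq_single m']
    · rw [MvPolynomial.coeff_C_mul, FFpoly_coeff_top, mul_one]
    · intro m hm hne
      rw [MvPolynomial.coeff_C_mul]
      have hzero : MvPolynomial.coeff (muD n m') (FFpoly n X' m) = 0 := by
        apply FFpoly_coeff_zero
        have hnotdom : ¬ ∀ i, m' i ≤ m i := fun hdom => hne (hSeq m hm hdom)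
        push_neg at hnotdom
        obtain ⟨i, hi⟩ := hnotdom
        refine ⟨i, ?_⟩
        have := hCnn' m (Finset.mem_filter.1 hm).1 i
        omega
      rw [hzero, mul_zero]
    · intro hnm
      exact absurd hm'S hnm
  rw [hP0, MvPolynomial.coeff_zero] at hcoeff
  have hfin : δ m' = 0 := by
    have := hcpow_ne m'
    field_simp at hcoeff
    simpa using hcoeff.symm
  linarith
lemma alg4 (a q P F : ℝ) (hq : q ≠ 0) : a * (P / F) = (a * q) * (P / (q * F)) := by
  calc a * (P / F) = a * (q / q) * (P / F) := by rw [div_self hq]; ring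
    _ = (a * q) * (P / (q * F)) := by ring

/-- For a stochastic mass-action system `(G, K^S_κ)` and
`ν(x) = c^x / x!` with `c > 0`: if there is an active copy `f` of `G` such
that `f + v` is node balanced with respect to `(K^S_κ, ν)` for every `v` in a
set `Ξ ⊆ ℤ^n_{≥0}` on which the only vanishing polynomial of degree at most
`d = max{‖y‖₁ : y → y' ∈ R}` is the zero polynomial, then `ν` is a complex
balanced measure. -/
theorem node_balanced_shifts_imply_complex_balanced
    (n d : ℕ) [DecidableEq (Fin n → ℤ)]
    (C : Finset (Fin n → ℤ)) (R : Finset ((Fin n → ℤ) × (Fin n → ℤ)))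
    (hCnn : ∀ y ∈ C, (0 : Fin n → ℤ) ≤ y)
    (hR : ∀ e ∈ R, e.1 ∈ C ∧ e.2 ∈ C ∧ e.1 ≠ e.2)
    (hcover : ∀ y ∈ C, ∃ e ∈ R, e.1 = y ∨ e.2 = y)
    (κ : (Fin n → ℤ) × (Fin n → ℤ) → ℝ) (hκ : ∀ e ∈ R, 0 < κ e)
    (Λ : (Fin n → ℤ) × (Fin n → ℤ) → (Fin n → ℤ) → ℝ)
    (hΛ : ∀ e : (Fin n → ℤ) × (Fin n → ℤ), ∀ x : Fin n → ℤ,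
      Λ e x = κ e * (if ∀ i, e.1 i ≤ x i then
          ∏ i, ((Nat.factorial (x i).toNat : ℝ)
            / (Nat.factorial ((x i - e.1 i).toNat) : ℝ))
        else 0))
    (c : Fin n → ℝ) (hc : ∀ i, 0 < c i)
    (ν : (Fin n → ℤ) → ℝ)
    (hν : ∀ x : Fin n → ℤ, (0 : Fin n → ℤ) ≤ x →
      ν x = (∏ i, c i ^ (x i).toNat) / ∏ i, (Nat.factorial (x i).toNat : ℝ))
    (hν0 : ∀ x : Fin n → ℤ, ¬ (0 : Fin n → ℤ) ≤ x → ν x = 0)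
    (hd : d = R.sup (fun e => ∑ i, (e.1 i).toNat))
    (Ξ : Set (Fin n → ℤ)) (hΞnn : ∀ v ∈ Ξ, (0 : Fin n → ℤ) ≤ v)
    (hΞ : ∀ p : MvPolynomial (Fin n) ℝ, p.totalDegree ≤ d →
      (∀ v ∈ Ξ, MvPolynomial.eval (fun i => ((v i : ℤ) : ℝ)) p = 0) → p = 0)
    (f : (Fin n → ℤ) → (Fin n → ℤ))
    (hfnn : ∀ z ∈ C, (0 : Fin n → ℤ) ≤ f z)
    (hcopy : ∀ e ∈ R, f e.2 - f e.1 = e.2 - e.1)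
    (hact : ∀ e ∈ R, 0 < Λ e (f e.1))
    (hnb : ∀ v ∈ Ξ, ∀ x ∈ C.image (fun z => f z + v),
      ν x * ∑ e ∈ R.filter (fun e => f e.1 + v = x), Λ e x
        = ∑ e ∈ R.filter (fun e => f e.2 + v = x),
            ν (f e.1 + v) * Λ e (f e.1 + v)) :
    ∀ y ∈ C, ∀ x : Fin n → ℤ, (0 : Fin n → ℤ) ≤ x →
      ∑ e ∈ R.filter (fun e => e.1 = y), Λ e x * ν x
        = ∑ e ∈ R.filter (fun e => e.2 = y),
            Λ e (x + e.1 - y) * ν (x + e.1 - y) := by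
  classical
  have key := key_balance n d C R hCnn hR hcover κ hκ Λ hΛ c hc ν hν hν0 hd Ξ hΞnn hΞ
    f hfnn hcopy hact hnb
  intro y hy x hx
  have hkey := key y hy
  have hynn : ∀ i, (0:ℤ) ≤ y i := fun i => by simpa using hCnn y hy i
  have hxnn' : ∀ i, (0:ℤ) ≤ x i := fun i => by simpa using hx i
  have hCnn' : ∀ z ∈ C, ∀ i, (0:ℤ) ≤ z i := by
    intro z hz i; simpa using hCnn z hz i
  have hffact_ne : ∀ z : Fin n → ℤ, ffactD n z ≠ 0 := fun z => ne_of_gt (ffactD_pos n z)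
  have hcpow_ne : ∀ z : Fin n → ℤ, cpowD n c z ≠ 0 := by
    intro z
    exact ne_of_gt (Finset.prod_pos fun i _ => pow_pos (hc i) _)
  by_cases hyx : ∀ i, y i ≤ x i
  · -- main case
    have hLHS : ∑ e ∈ R.filter (fun e => e.1 = y), Λ e x * ν x
        = (∑ e ∈ R.filter (fun e => e.1 = y), κ e) * (cpowD n c x / ffactD n (x - y)) := by
      rw [Finset.sum_mul]
      refine Finset.sum_congr rfl fun e he => ?_
      have he1 : e.1 = y := (Finset.mem_filter.1 he).2
      rw [hΛ, hν x hx, he1, if_pos hyx]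
      have hpd : ∏ i, ((Nat.factorial (x i).toNat : ℝ) / (Nat.factorial ((x i - y i).toNat) : ℝ))
          = ffactD n x / ffactD n (x - y) := by
        rw [Finset.prod_div_distrib]
        rw [ffactD, ffactD]
        congr 1
      rw [hpd, show (∏ i, c i ^ (x i).toNat) = cpowD n c x from rfl,
        show (∏ i, (Nat.factorial (x i).toNat : ℝ)) = ffactD n x from rfl]
      rw [mul_comm]
      exact alg1 (cpowD n c x) (ffactD n x) (ffactD n (x - y)) (κ e) (hffact_ne _)
    have hRHS : ∑ e ∈ R.filter (fun e => e.2 = y), Λ e (x + e.1 - y) * ν (x + e.1 - y)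
        = ∑ e ∈ R.filter (fun e => e.2 = y),
            (κ e * cpowD n c e.1) * (cpowD n c x / (cpowD n c y * ffactD n (x - y))) := by
      refine Finset.sum_congr rfl fun e he => ?_
      have heR : e ∈ R := Finset.mem_of_mem_filter _ he
      have he2 : e.2 = y := (Finset.mem_filter.1 he).2
      have he1nn : ∀ i, (0:ℤ) ≤ e.1 i := hCnn' e.1 (hR e heR).1
      have hcond : ∀ i, e.1 i ≤ (x + e.1 - y) i := by
        intro i
        have h1 := hyx i
        simp only [Pi.add_apply, Pi.sub_apply]
        omega
      have hwnn' : ∀ i, (0:ℤ) ≤ (x + e.1 - y) i := fun i => le_trans (he1nn i) (hcond i)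
      have hwnn : (0 : Fin n → ℤ) ≤ (x + e.1 - y) := by
        intro i; simpa using hwnn' i
      rw [hΛ, hν _ hwnn, if_pos hcond]
      have hwsub : ∀ i, (x + e.1 - y) i - e.1 i = (x - y) i := by
        intro i
        simp only [Pi.add_apply, Pi.sub_apply]
        omega
      have hpd : ∏ i, ((Nat.factorial ((x + e.1 - y) i).toNat : ℝ)
            / (Nat.factorial (((x + e.1 - y) i - e.1 i).toNat) : ℝ))
          = ffactD n (x + e.1 - y) / ffactD n (x - y) := by
        rw [Finset.prod_div_distrib]
        rw [ffactD, ffactD]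
        congr 1
        refine Finset.prod_congr rfl fun i _ => ?_
        rw [hwsub i]
      have hcw : cpowD n c (x + e.1 - y) * cpowD n c y = cpowD n c x * cpowD n c e.1 := by
        rw [cpowD, cpowD, cpowD, cpowD, ← Finset.prod_mul_distrib, ← Finset.prod_mul_distrib]
        refine Finset.prod_congr rfl fun i _ => ?_
        rw [← pow_add, ← pow_add]
        congr 1
        have h1 := he1nn i
        have h2 := hynn i
        have h3 := hxnn' i
        have h4 := hwnn' i
        have h5 := hyx i
        simp only [Pi.add_apply, Pi.sub_apply] at h4 ⊢
        omega
      rw [hpd, show (∏ i, c i ^ ((x + e.1 - y) i).toNat) = cpowD n c (x + e.1 - y) from rfl,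
        show (∏ i, (Nat.factorial ((x + e.1 - y) i).toNat : ℝ)) = ffactD n (x + e.1 - y) from rfl]
      rw [mul_comm]
      exact alg2 (cpowD n c (x + e.1 - y)) (ffactD n (x + e.1 - y)) (ffactD n (x - y))
        (cpowD n c x) (cpowD n c e.1) (cpowD n c y) (κ e) (hffact_ne _) (hcpow_ne _) hcw
    rw [hLHS, hRHS, ← Finset.sum_mul, ← hkey]
    exact alg4 (∑ e ∈ R.filter (fun e => e.1 = y), κ e) (cpowD n c y) (cpowD n c x)
      (ffactD n (x - y)) (hcpow_ne _)
  · -- degenerate case: both sides vanish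
    have hL : ∀ e ∈ R.filter (fun e => e.1 = y), Λ e x * ν x = 0 := by
      intro e he
      have he1 : e.1 = y := (Finset.mem_filter.1 he).2
      rw [hΛ, he1, if_neg hyx, mul_zero, zero_mul]
    have hRz : ∀ e ∈ R.filter (fun e => e.2 = y), Λ e (x + e.1 - y) * ν (x + e.1 - y) = 0 := by
      intro e he
      rw [hΛ, if_neg, mul_zero, zero_mul]
      intro hall
      apply hyx
      intro i
      have := hall i
      simp only [Pi.add_apply, Pi.sub_apply] at this
      omega
    rw [Finset.sum_eq_zero hL, Finset.sum_eq_zero hRz]
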